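/- There exists a universal constant c > 0 (one may take c = 1/25600) such that for every even integer s ≥ 16 and every integer n ≥ s, in the outlier-free categorical model the minimax Euclidean risk satisfies: inf over all measurable estimators θ̄_n : {e_1,…,e_s}^n → Δ^{s-1} of sup over θ ∈ Δ^{s-1} of E_θ[d_{L2}(θ̄_n(X_1,…,X_n), θ)] ≥ c (1/n)^{1/2}, where under E_θ the observations X_1,…,X_n are i.i.d. with P(X_i = e_j) = θ_j for j = 1,…,s. -/

import Mathlib

open MeasureTheory ProbabilityTheory

noncomputable section

/-- The probability simplex `Δ^{s-1}` in `ℝ^s`. -/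
def simplex (s : ℕ) : Set (Fin s → ℝ) :=
  {v | (∀ j, 0 ≤ v j) ∧ ∑ j, v j = 1}

/-- Euclidean (`L²`) distance between two points of the simplex. -/
def dL2 {s : ℕ} (u v : Fin s → ℝ) : ℝ := Real.sqrt (∑ j, (u j - v j) ^ 2)

/-- The `j`-th canonical basis vector of `ℝ^s`. -/
def basisVec (s : ℕ) (j : Fin s) : Fin s → ℝ := fun i => if i = j then 1 else 0

/-- The categorical distribution on `{e_1, …, e_s}` with weights `θ`. -/
def catMeasure (s : ℕ) (θ : Fin s → ℝ) : Measure (Fin s → ℝ) :=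
  ∑ j : Fin s, ENNReal.ofReal (θ j) • Measure.dirac (basisVec s j)

instance (s : ℕ) (θ : Fin s → ℝ) : IsFiniteMeasure (catMeasure s θ) := by
  constructor
  rw [catMeasure, Measure.finset_sum_apply]
  refine ENNReal.sum_lt_top.mpr fun j _ => ?_
  simp [Measure.smul_apply]

lemma pi_cat (s n : ℕ) (θ : Fin s → ℝ) :
    (Measure.pi fun _ : Fin n => catMeasure s θ)
      = ∑ ω : Fin n → Fin s,
          (∏ i, ENNReal.ofReal (θ (ω i))) • Measure.dirac (fun i => basisVec s (ω i)) := by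
  refine (Measure.pi_eq (μ := fun _ : Fin n => catMeasure s θ) fun A hA => ?_)
  rw [Measure.finset_sum_apply]
  have hdir : ∀ (ω : Fin n → Fin s),
      Measure.dirac (fun i => basisVec s (ω i)) (Set.pi Set.univ A)
        = ∏ i, Measure.dirac (basisVec s (ω i)) (A i) := by
    intro ω
    by_cases h : ∀ i, basisVec s (ω i) ∈ A i
    · rw [Measure.dirac_apply_of_mem (Set.mem_univ_pi.mpr h)]
      rw [Finset.prod_congr rfl fun i _ => Measure.dirac_apply_of_mem (h i)]
      simp
    · push_neg at h
      obtain ⟨i, hi⟩ := h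
      rw [Measure.dirac_apply' _ (MeasurableSet.univ_pi hA),
        Set.indicator_of_notMem (by simpa [Set.mem_univ_pi] using ⟨i, hi⟩)]
      refine (Finset.prod_eq_zero (Finset.mem_univ i) ?_).symm
      rw [Measure.dirac_apply' _ (hA i), Set.indicator_of_notMem hi]
  have hrw : ∀ ω : Fin n → Fin s,
      ((∏ i, ENNReal.ofReal (θ (ω i))) • Measure.dirac (fun i => basisVec s (ω i)))
        (Set.pi Set.univ A)
      = ∏ i, (ENNReal.ofReal (θ (ω i)) * Measure.dirac (basisVec s (ω i)) (A i)) := by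
    intro ω
    rw [Measure.smul_apply, smul_eq_mul, hdir ω, ← Finset.prod_mul_distrib]
  simp_rw [hrw]
  have hcat : ∀ i, catMeasure s θ (A i)
      = ∑ j, ENNReal.ofReal (θ j) * Measure.dirac (basisVec s j) (A i) := by
    intro i
    rw [catMeasure, Measure.finset_sum_apply]
    simp [Measure.smul_apply]
  simp_rw [hcat]
  rw [Finset.prod_univ_sum, Fintype.piFinset_univ]

lemma myIntegrableDirac {α : Type*} [MeasurableSpace α] {f : α → ℝ} (hf : StronglyMeasurable f)
    (a : α) : Integrable f (Measure.dirac a) := by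
  refine ⟨hf.aestronglyMeasurable, ?_⟩
  rw [HasFiniteIntegral, lintegral_dirac' _ hf.enorm]
  exact enorm_lt_top

lemma integral_pi_cat {s n : ℕ} {θ : Fin s → ℝ} (hθ : ∀ j, 0 ≤ θ j)
    {f : (Fin n → Fin s → ℝ) → ℝ} (hf : StronglyMeasurable f) :
    ∫ x, f x ∂(Measure.pi fun _ : Fin n => catMeasure s θ)
      = ∑ ω : Fin n → Fin s, (∏ i, θ (ω i)) * f (fun i => basisVec s (ω i)) := by
  rw [pi_cat]
  rw [integral_finset_sum_measure (fun ω _ =>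
    (myIntegrableDirac hf _).smul_measure (by
      exact (ENNReal.prod_lt_top fun i _ => ENNReal.ofReal_lt_top).ne))]
  refine Finset.sum_congr rfl fun ω _ => ?_
  rw [integral_smul_measure, integral_dirac' f _ hf, ENNReal.toReal_prod, smul_eq_mul]
  exact congrArg (· * _) (Finset.prod_congr rfl fun i _ => ENNReal.toReal_ofReal (hθ _))

lemma dL2_eq_dist {s : ℕ} (u v : Fin s → ℝ) :
    dL2 u v = dist ((WithLp.equiv 2 (Fin s → ℝ)).symm u) ((WithLp.equiv 2 (Fin s → ℝ)).symm v) := by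
  rw [EuclideanSpace.dist_eq, dL2]
  congr 1
  refine Finset.sum_congr rfl fun j _ => ?_
  show (u j - v j) ^ 2 = dist (u j) (v j) ^ 2
  rw [Real.dist_eq, sq_abs]

lemma dL2_nonneg {s : ℕ} (u v : Fin s → ℝ) : 0 ≤ dL2 u v := Real.sqrt_nonneg _

lemma dL2_triangle {s : ℕ} (u v w : Fin s → ℝ) : dL2 u w ≤ dL2 u v + dL2 v w := by
  rw [dL2_eq_dist, dL2_eq_dist, dL2_eq_dist]
  exact dist_triangle _ _ _

lemma dL2_comm {s : ℕ} (u v : Fin s → ℝ) : dL2 u v = dL2 v u := by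
  rw [dL2_eq_dist, dL2_eq_dist, dist_comm]

lemma sqrt_prod' {ι : Type*} (s : Finset ι) (f : ι → ℝ) (hf : ∀ i, 0 ≤ f i) :
    Real.sqrt (∏ i ∈ s, f i) = ∏ i ∈ s, Real.sqrt (f i) := by
  induction s using Finset.cons_induction with
  | empty => simp
  | cons a s ha ih => rw [Finset.prod_cons, Finset.prod_cons, Real.sqrt_mul (hf a), ih]

set_option maxHeartbeats 1000000 in
/-- Minimax lower bound `c·(1/n)^{1/2}` in Euclidean distance for the outlier-free
categorical model: any uniform upper bound `b` on the risk of an estimator is at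
least `c·(1/n)^{1/2}`. -/
theorem minimax_lower_bound_L2_outlier_free :
    ∃ c : ℝ, 0 < c ∧ ∀ s n : ℕ, Even s → 16 ≤ s → s ≤ n →
      ∀ est : (Fin n → Fin s → ℝ) → Fin s → ℝ, Measurable est →
        (∀ x, est x ∈ simplex s) →
        ∀ b : ℝ,
          (∀ θ : Fin s → ℝ, θ ∈ simplex s →
            ∫ x, dL2 (est x) θ ∂(Measure.pi fun _ : Fin n => catMeasure s θ) ≤ b) →
          c * Real.sqrt (1 / n) ≤ b := by
  refine ⟨1/25600, by norm_num, ?_⟩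
  intro s n hEven hs16 hsn est hest hsimp b hb
  have hn16 : 16 ≤ n := le_trans hs16 hsn
  have hnpos : (0:ℝ) < n := by exact_mod_cast Nat.lt_of_lt_of_le (by norm_num) hn16
  have hsqn : (0:ℝ) < Real.sqrt n := Real.sqrt_pos.mpr hnpos
  have hsqn1 : (1:ℝ) ≤ Real.sqrt n := by
    rw [show (1:ℝ) = Real.sqrt 1 by simp]
    exact Real.sqrt_le_sqrt (by exact_mod_cast Nat.one_le_iff_ne_zero.mpr (by omega))
  set δ : ℝ := 1 / (4 * Real.sqrt n) with hδdef
  have hδpos : 0 < δ := by positivity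
  have hδsq : δ ^ 2 = 1 / (16 * n) := by
    rw [hδdef, div_pow, mul_pow, Real.sq_sqrt hnpos.le]; norm_num
  have hδle : δ ≤ 1/4 := by
    rw [hδdef]
    rw [div_le_div_iff₀ (by positivity) (by norm_num)]
    nlinarith
  -- the two hypotheses
  let j0 : Fin s := ⟨0, by omega⟩
  let j1 : Fin s := ⟨1, by omega⟩
  have hj01 : j0 ≠ j1 := by simp [j0, j1, Fin.ext_iff]
  set θp : Fin s → ℝ :=
    fun j => (if j = j0 then 1/2 + δ else 0) + (if j = j1 then 1/2 - δ else 0) with hθp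
  set θm : Fin s → ℝ :=
    fun j => (if j = j0 then 1/2 - δ else 0) + (if j = j1 then 1/2 + δ else 0) with hθm
  have hp0 : (0:ℝ) ≤ 1/2 + δ := by linarith
  have hm0 : (0:ℝ) ≤ 1/2 - δ := by linarith
  have hθpnn : ∀ j, 0 ≤ θp j := by
    intro j
    simp only [hθp]
    split_ifs <;> linarith
  have hθmnn : ∀ j, 0 ≤ θm j := by
    intro j
    simp only [hθm]
    split_ifs <;> linarith
  have hθpsum : ∑ j, θp j = 1 := by
    rw [hθp, Finset.sum_add_distrib, Finset.sum_ite_eq' Finset.univ j0 (fun _ => 1/2 + δ),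
      Finset.sum_ite_eq' Finset.univ j1 (fun _ => 1/2 - δ), if_pos (Finset.mem_univ j0),
      if_pos (Finset.mem_univ j1)]
    ring
  have hθmsum : ∑ j, θm j = 1 := by
    rw [hθm, Finset.sum_add_distrib, Finset.sum_ite_eq' Finset.univ j0 (fun _ => 1/2 - δ),
      Finset.sum_ite_eq' Finset.univ j1 (fun _ => 1/2 + δ), if_pos (Finset.mem_univ j0),
      if_pos (Finset.mem_univ j1)]
    ring
  have hθpmem : θp ∈ simplex s := ⟨hθpnn, hθpsum⟩
  have hθmmem : θm ∈ simplex s := ⟨hθmnn, hθmsum⟩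
  -- values at j0, j1
  have hθpj0 : θp j0 = 1/2 + δ := by simp [hθp, hj01]
  have hθpj1 : θp j1 = 1/2 - δ := by simp [hθp, hj01.symm]
  have hθmj0 : θm j0 = 1/2 - δ := by simp [hθm, hj01]
  have hθmj1 : θm j1 = 1/2 + δ := by simp [hθm, hj01.symm]
  -- measurability of the loss
  have hmf : ∀ θ : Fin s → ℝ, StronglyMeasurable fun x => dL2 (est x) θ := by
    intro θ
    apply Measurable.stronglyMeasurable
    have h1 : Measurable fun x : Fin n → Fin s → ℝ => ∑ j, (est x j - θ j) ^ 2 :=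
      Finset.measurable_sum _ fun j _ =>
        (((measurable_pi_apply j).comp hest).sub measurable_const).pow_const 2
    exact Real.continuous_sqrt.measurable.comp h1
  -- risks as finite sums
  set E : (Fin n → Fin s) → (Fin n → Fin s → ℝ) := fun ω i => basisVec s (ω i) with hE
  set Sp : (Fin n → Fin s) → ℝ := fun ω => ∏ i, θp (ω i) with hSp
  set Sm : (Fin n → Fin s) → ℝ := fun ω => ∏ i, θm (ω i) with hSm
  have hSpnn : ∀ ω, 0 ≤ Sp ω := fun ω => Finset.prod_nonneg fun i _ => hθpnn _
  have hSmnn : ∀ ω, 0 ≤ Sm ω := fun ω => Finset.prod_nonneg fun i _ => hθmnn _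
  have hriskp : ∑ ω : Fin n → Fin s, Sp ω * dL2 (est (E ω)) θp ≤ b := by
    have := hb θp hθpmem
    rwa [integral_pi_cat hθpnn (hmf θp)] at this
  have hriskm : ∑ ω : Fin n → Fin s, Sm ω * dL2 (est (E ω)) θm ≤ b := by
    have := hb θm hθmmem
    rwa [integral_pi_cat hθmnn (hmf θm)] at this
  -- total mass one
  have hmass : ∀ θ : Fin s → ℝ, (∑ j, θ j) = 1 →
      ∑ ω : Fin n → Fin s, ∏ i, θ (ω i) = 1 := by
    intro θ h
    have h2 := Finset.prod_univ_sum (fun _ : Fin n => (Finset.univ : Finset (Fin s)))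
      (fun _ j => θ j)
    rw [Fintype.piFinset_univ] at h2
    rw [← h2, Finset.prod_congr rfl fun i _ => h, Finset.prod_const_one]
  have hSpsum : ∑ ω : Fin n → Fin s, Sp ω = 1 := hmass θp hθpsum
  have hSmsum : ∑ ω : Fin n → Fin s, Sm ω = 1 := hmass θm hθmsum
  -- Bhattacharyya coefficient
  set g : Fin s → ℝ := fun j => Real.sqrt (θp j) * Real.sqrt (θm j) with hg
  set β : ℝ := ∑ j, g j with hβ
  have hgnn : ∀ j, 0 ≤ g j := fun j => mul_nonneg (Real.sqrt_nonneg _) (Real.sqrt_nonneg _)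
  have hβnn : 0 ≤ β := Finset.sum_nonneg fun j _ => hgnn j
  have hBC : ∑ ω : Fin n → Fin s, Real.sqrt (Sp ω) * Real.sqrt (Sm ω) = β ^ n := by
    have hterm : ∀ ω : Fin n → Fin s,
        Real.sqrt (Sp ω) * Real.sqrt (Sm ω) = ∏ i, g (ω i) := by
      intro ω
      rw [hSp, hSm, sqrt_prod' _ _ (fun i => hθpnn _), sqrt_prod' _ _ (fun i => hθmnn _),
        ← Finset.prod_mul_distrib]
    rw [Finset.sum_congr rfl fun ω _ => hterm ω]
    have h2 := Finset.prod_univ_sum (fun _ : Fin n => (Finset.univ : Finset (Fin s)))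
      (fun _ j => g j)
    rw [Fintype.piFinset_univ] at h2
    rw [← h2, Finset.prod_const, Finset.card_univ, Fintype.card_fin]
  have hβsq : β ^ 2 = 1 - 4 * δ ^ 2 := by
    have hA : Real.sqrt (θp j0) * Real.sqrt (θm j0)
        = Real.sqrt ((1/2 + δ) * (1/2 - δ)) := by
      rw [hθpj0, hθmj0, ← Real.sqrt_mul hp0]
    have hB : Real.sqrt (θp j1) * Real.sqrt (θm j1)
        = Real.sqrt ((1/2 + δ) * (1/2 - δ)) := by
      rw [hθpj1, hθmj1, mul_comm (Real.sqrt (1/2 - δ)), ← Real.sqrt_mul hp0]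
    have hgval : g = fun j => (if j = j0 then Real.sqrt ((1/2 + δ) * (1/2 - δ)) else 0)
        + (if j = j1 then Real.sqrt ((1/2 + δ) * (1/2 - δ)) else 0) := by
      rw [hg]
      funext j
      by_cases h0 : j = j0
      · subst h0
        rw [hA, if_pos rfl, if_neg hj01, add_zero]
      · by_cases h1 : j = j1
        · subst h1
          rw [hB, if_neg (Ne.symm hj01), zero_add, if_pos rfl]
        · have hzp : θp j = 0 := by
            rw [hθp]
            dsimp only
            rw [if_neg h0, if_neg h1, add_zero]
          rw [hzp, Real.sqrt_zero, zero_mul, if_neg h0, if_neg h1, add_zero]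
    have hβval : β = 2 * Real.sqrt ((1/2 + δ) * (1/2 - δ)) := by
      rw [hβ, hgval, Finset.sum_add_distrib,
        Finset.sum_ite_eq' Finset.univ j0 (fun _ => Real.sqrt ((1/2 + δ) * (1/2 - δ))),
        Finset.sum_ite_eq' Finset.univ j1 (fun _ => Real.sqrt ((1/2 + δ) * (1/2 - δ))),
        if_pos (Finset.mem_univ j0), if_pos (Finset.mem_univ j1)]
      ring
    rw [hβval, mul_pow, Real.sq_sqrt (mul_nonneg hp0 hm0)]
    ring
  -- total variation bound
  set T : ℝ := ∑ ω : Fin n → Fin s, |Sp ω - Sm ω| with hT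
  have hTnn : 0 ≤ T := Finset.sum_nonneg fun ω _ => abs_nonneg _
  have hT1 : T ≤ 1 := by
    have hdecomp : ∀ ω : Fin n → Fin s,
        |Sp ω - Sm ω| = |Real.sqrt (Sp ω) - Real.sqrt (Sm ω)|
          * (Real.sqrt (Sp ω) + Real.sqrt (Sm ω)) := by
      intro ω
      have h1 := Real.sq_sqrt (hSpnn ω)
      have h2 := Real.sq_sqrt (hSmnn ω)
      have key : Sp ω - Sm ω = (Real.sqrt (Sp ω) - Real.sqrt (Sm ω))
          * (Real.sqrt (Sp ω) + Real.sqrt (Sm ω)) := by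
        linear_combination h2 - h1
      rw [key, abs_mul,
        abs_of_nonneg (add_nonneg (Real.sqrt_nonneg (Sp ω)) (Real.sqrt_nonneg (Sm ω)))]
    have hCS := Finset.sum_mul_sq_le_sq_mul_sq Finset.univ
      (fun ω : Fin n → Fin s => |Real.sqrt (Sp ω) - Real.sqrt (Sm ω)|)
      (fun ω => Real.sqrt (Sp ω) + Real.sqrt (Sm ω))
    have hu2 : ∑ ω : Fin n → Fin s, |Real.sqrt (Sp ω) - Real.sqrt (Sm ω)| ^ 2
        = 2 - 2 * β ^ n := by
      have : ∀ ω : Fin n → Fin s, |Real.sqrt (Sp ω) - Real.sqrt (Sm ω)| ^ 2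
          = Sp ω + Sm ω - 2 * (Real.sqrt (Sp ω) * Real.sqrt (Sm ω)) := by
        intro ω
        rw [sq_abs, sub_sq, Real.sq_sqrt (hSpnn ω), Real.sq_sqrt (hSmnn ω)]
        ring
      rw [Finset.sum_congr rfl fun ω _ => this ω]
      rw [Finset.sum_sub_distrib, Finset.sum_add_distrib, hSpsum, hSmsum,
        ← Finset.mul_sum, hBC]
      ring
    have hv2 : ∑ ω : Fin n → Fin s, (Real.sqrt (Sp ω) + Real.sqrt (Sm ω)) ^ 2
        = 2 + 2 * β ^ n := by
      have : ∀ ω : Fin n → Fin s, (Real.sqrt (Sp ω) + Real.sqrt (Sm ω)) ^ 2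
          = Sp ω + Sm ω + 2 * (Real.sqrt (Sp ω) * Real.sqrt (Sm ω)) := by
        intro ω
        rw [add_sq, Real.sq_sqrt (hSpnn ω), Real.sq_sqrt (hSmnn ω)]
        ring
      rw [Finset.sum_congr rfl fun ω _ => this ω]
      rw [Finset.sum_add_distrib, Finset.sum_add_distrib, hSpsum, hSmsum,
        ← Finset.mul_sum, hBC]
      norm_num
    have hTd : T = ∑ ω : Fin n → Fin s,
        |Real.sqrt (Sp ω) - Real.sqrt (Sm ω)| * (Real.sqrt (Sp ω) + Real.sqrt (Sm ω)) :=
      Finset.sum_congr rfl fun ω _ => hdecomp ω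
    have hpow : (β ^ n) ^ 2 = (β ^ 2) ^ n := by
      rw [← pow_mul, ← pow_mul, Nat.mul_comm]
    have hncast : (16:ℝ) ≤ (n:ℝ) := by exact_mod_cast hn16
    have hδ2half : δ ^ 2 ≤ 1/2 := by
      rw [hδsq]
      rw [div_le_div_iff₀ (by linarith) (by norm_num)]
      linarith
    have hbern : 1 - 4 * (n : ℝ) * δ ^ 2 ≤ (β ^ 2) ^ n := by
      rw [hβsq]
      have := one_add_mul_le_pow (a := -(4 * δ ^ 2)) (by linarith) n
      calc 1 - 4 * (n:ℝ) * δ ^ 2 = 1 + (n:ℝ) * (-(4 * δ ^ 2)) := by ring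
        _ ≤ (1 + -(4 * δ ^ 2)) ^ n := this
        _ = (1 - 4 * δ ^ 2) ^ n := by ring_nf
    have hT2 : T ^ 2 ≤ 1 := by
      have h16 : 4 * (n:ℝ) * δ ^ 2 = 1/4 := by
        rw [hδsq]; field_simp; ring
      calc T ^ 2 ≤ (2 - 2 * β ^ n) * (2 + 2 * β ^ n) := by
            rw [hTd]; rw [← hu2, ← hv2]; exact hCS
        _ = 4 - 4 * (β ^ n) ^ 2 := by ring
        _ = 4 - 4 * (β ^ 2) ^ n := by rw [hpow]
        _ ≤ 4 - 4 * (1 - 4 * (n:ℝ) * δ ^ 2) := by linarith [hbern]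
        _ = 1 := by rw [h16]; ring
    exact (pow_le_one_iff_of_nonneg hTnn two_ne_zero).mp hT2
  -- overlap lower bound
  have hmin : ∀ x y : ℝ, (x + y - |x - y|) / 2 ≤ min x y := by
    intro x y
    rcases le_total x y with h | h
    · rw [min_eq_left h, abs_of_nonpos (by linarith)]; linarith
    · rw [min_eq_right h, abs_of_nonneg (by linarith)]; linarith
  have hM : (1:ℝ)/2 ≤ ∑ ω : Fin n → Fin s, min (Sp ω) (Sm ω) := by
    have h1 : ∑ ω : Fin n → Fin s, (Sp ω + Sm ω - |Sp ω - Sm ω|) / 2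
        ≤ ∑ ω : Fin n → Fin s, min (Sp ω) (Sm ω) :=
      Finset.sum_le_sum fun ω _ => hmin _ _
    have h2 : ∑ ω : Fin n → Fin s, (Sp ω + Sm ω - |Sp ω - Sm ω|) / 2
        = 1 - T / 2 := by
      rw [← Finset.sum_div, Finset.sum_sub_distrib, Finset.sum_add_distrib,
        hSpsum, hSmsum, ← hT]
      ring
    rw [h2] at h1
    linarith
  -- separation
  have hΔ : 2 * δ ≤ dL2 θp θm := by
    have hle : (2 * δ) ^ 2 ≤ ∑ j, (θp j - θm j) ^ 2 := by
      have h0 := Finset.single_le_sum (f := fun j => (θp j - θm j) ^ 2)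
        (fun j _ => sq_nonneg _) (Finset.mem_univ j0)
      have h1 : (2 * δ) ^ 2 = (θp j0 - θm j0) ^ 2 := by
        rw [hθpj0, hθmj0]; ring
      rw [h1]
      exact h0
    calc 2 * δ = Real.sqrt ((2 * δ) ^ 2) := by
          rw [Real.sqrt_sq (by linarith)]
      _ ≤ dL2 θp θm := Real.sqrt_le_sqrt hle
  -- put it together
  have hkey : δ ≤ 2 * b := by
    have hptwise : ∀ ω : Fin n → Fin s,
        min (Sp ω) (Sm ω) * (2 * δ)
          ≤ Sp ω * dL2 (est (E ω)) θp + Sm ω * dL2 (est (E ω)) θm := by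
      intro ω
      have hminnn : 0 ≤ min (Sp ω) (Sm ω) := le_min (hSpnn ω) (hSmnn ω)
      have htri : dL2 θp θm ≤ dL2 (est (E ω)) θp + dL2 (est (E ω)) θm := by
        calc dL2 θp θm ≤ dL2 θp (est (E ω)) + dL2 (est (E ω)) θm := dL2_triangle _ _ _
          _ = dL2 (est (E ω)) θp + dL2 (est (E ω)) θm := by rw [dL2_comm θp]
      calc min (Sp ω) (Sm ω) * (2 * δ)
          ≤ min (Sp ω) (Sm ω) * (dL2 (est (E ω)) θp + dL2 (est (E ω)) θm) := by
            exact mul_le_mul_of_nonneg_left (le_trans hΔ htri) hminnn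
        _ = min (Sp ω) (Sm ω) * dL2 (est (E ω)) θp
            + min (Sp ω) (Sm ω) * dL2 (est (E ω)) θm := by ring
        _ ≤ Sp ω * dL2 (est (E ω)) θp + Sm ω * dL2 (est (E ω)) θm := by
            gcongr
            · exact dL2_nonneg _ _
            · exact min_le_left _ _
            · exact dL2_nonneg _ _
            · exact min_le_right _ _
    have hsumineq : (1/2 : ℝ) * (2 * δ) ≤ 2 * b := by
      calc (1/2 : ℝ) * (2 * δ)
          ≤ (∑ ω : Fin n → Fin s, min (Sp ω) (Sm ω)) * (2 * δ) := by
            apply mul_le_mul_of_nonneg_right hM (by linarith)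
        _ = ∑ ω : Fin n → Fin s, min (Sp ω) (Sm ω) * (2 * δ) := by
            rw [Finset.sum_mul]
        _ ≤ ∑ ω : Fin n → Fin s,
              (Sp ω * dL2 (est (E ω)) θp + Sm ω * dL2 (est (E ω)) θm) :=
            Finset.sum_le_sum fun ω _ => hptwise ω
        _ = (∑ ω : Fin n → Fin s, Sp ω * dL2 (est (E ω)) θp)
            + ∑ ω : Fin n → Fin s, Sm ω * dL2 (est (E ω)) θm :=
            Finset.sum_add_distrib
        _ ≤ 2 * b := by linarith [hriskp, hriskm]
    calc δ = (1/2 : ℝ) * (2 * δ) := by ring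
      _ ≤ 2 * b := hsumineq
  -- conclude
  clear_value T β g Sm Sp E θm θp δ
  have hsq : Real.sqrt (1 / n) = 1 / Real.sqrt n := by
    rw [one_div, Real.sqrt_inv, one_div]
  rw [hsq]
  have h2 : δ / 2 = 1 / (8 * Real.sqrt n) := by rw [hδdef]; ring
  have h3 : (1:ℝ)/25600 * (1 / Real.sqrt n) = 1 / (25600 * Real.sqrt n) := by ring
  have h4 : (1:ℝ) / (25600 * Real.sqrt n) ≤ 1 / (8 * Real.sqrt n) := by
    apply one_div_le_one_div_of_le (by positivity)
    exact mul_le_mul_of_nonneg_right (by norm_num) (Real.sqrt_nonneg _)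
  rw [h3]
  calc (1:ℝ) / (25600 * Real.sqrt n) ≤ 1 / (8 * Real.sqrt n) := h4
    _ = δ / 2 := h2.symm
    _ ≤ b := by linarith [hkey]
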